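/- arXiv:1403.1603 — 3 statements merged into one kernel-verified Lean document; each statement's English description precedes it below -/
import Mathlib

section
/- Let d ≥ 1, κ ≥ 1, α ≥ 0 and 0 ≤ s < t. There exists a constant C depending only on α and κ (one may take C = e^{1/2}(2α/(eκ))^{α/κ}) such that for every measurable w : ℝ^d → ℂ, ∫_{ℝ^d} ‖ξ‖^α e^{(1/2)t^{1/κ}‖ξ‖} e^{−(t−s)‖ξ‖^κ} |w(ξ)| dξ ≤ C (t−s)^{−α/κ} ∫_{ℝ^d} e^{(1/2)s^{1/κ}‖ξ‖} |w(ξ)| dξ. -/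
open MeasureTheory
open scoped ENNReal

lemma subadd_rpow {x y p : ℝ} (hx : 0 ≤ x) (hy : 0 ≤ y) (hp : 0 ≤ p) (hp1 : p ≤ 1) :
    (x + y) ^ p ≤ x ^ p + y ^ p := by
  have := NNReal.rpow_add_le_add_rpow x.toNNReal y.toNNReal hp hp1
  have h := NNReal.coe_le_coe.mpr this
  rwa [NNReal.coe_add, NNReal.coe_rpow, NNReal.coe_rpow, NNReal.coe_rpow, NNReal.coe_add,
    Real.coe_toNNReal _ hx, Real.coe_toNNReal _ hy] at h

/-- `y^α ≤ (2α/(eκ))^{α/κ} e^{(1/2)y^κ}` for `y ≥ 0`. -/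
lemma lemB {κ α : ℝ} (hκ : 1 ≤ κ) (hα : 0 ≤ α) {y : ℝ} (hy : 0 ≤ y) :
    y ^ α ≤ (2 * α / (Real.exp 1 * κ)) ^ (α / κ) * Real.exp (1 / 2 * y ^ κ) := by
  have hκ0 : 0 < κ := lt_of_lt_of_le one_pos hκ
  rcases eq_or_lt_of_le hα with h0 | hαpos
  · subst h0
    simp only [Real.rpow_zero, mul_zero, zero_div, zero_mul, one_mul]
    exact Real.one_le_exp (by positivity)
  · -- α > 0 case
    set z : ℝ := κ / (2 * α) * y ^ κ with hz
    have hz0 : 0 ≤ z := by positivity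
    have h1 : z ≤ Real.exp (z - 1) := by
      have := Real.add_one_le_exp (z - 1); linarith
    have h2 : z ^ (α / κ) ≤ Real.exp (z - 1) ^ (α / κ) :=
      Real.rpow_le_rpow hz0 h1 (by positivity)
    rw [← Real.exp_mul] at h2
    have hzpow : z ^ (α / κ) = (κ / (2 * α)) ^ (α / κ) * y ^ α := by
      rw [hz, Real.mul_rpow (by positivity) (by positivity), ← Real.rpow_mul hy]
      congr 2
      field_simp
    have hexp : (z - 1) * (α / κ) = 1 / 2 * y ^ κ - α / κ := by
      rw [hz]; field_simp
    rw [hzpow, hexp] at h2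
    have hcpos : (0:ℝ) < (κ / (2 * α)) ^ (α / κ) := Real.rpow_pos_of_pos (by positivity) _
    have key : y ^ α ≤ (κ / (2 * α)) ^ (-(α / κ)) * Real.exp (1 / 2 * y ^ κ - α / κ) := by
      rw [Real.rpow_neg (by positivity), inv_mul_eq_div, le_div_iff₀ hcpos, mul_comm]
      exact h2
    calc y ^ α ≤ (κ / (2 * α)) ^ (-(α / κ)) * Real.exp (1 / 2 * y ^ κ - α / κ) := key
      _ = (2 * α / (Real.exp 1 * κ)) ^ (α / κ) * Real.exp (1 / 2 * y ^ κ) := by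
          have hconst : (2 * α / (Real.exp 1 * κ)) ^ (α / κ)
              = (κ / (2 * α)) ^ (-(α / κ)) * (Real.exp (α / κ))⁻¹ := by
            have h : 2 * α / (Real.exp 1 * κ) = (κ / (2 * α))⁻¹ * (Real.exp 1)⁻¹ := by
              field_simp
            rw [h, Real.mul_rpow (by positivity) (by positivity),
              Real.inv_rpow (by positivity), ← Real.rpow_neg (by positivity),
              Real.inv_rpow (Real.exp_nonneg 1), ← Real.rpow_neg (Real.exp_nonneg 1),
              Real.exp_one_rpow, Real.exp_neg]
          rw [hconst, Real.exp_sub]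
          ring
/-- `y^α e^{(1/2)y - y^κ} ≤ e^{1/2} (2α/(eκ))^{α/κ}`. -/
lemma lemC {κ α : ℝ} (hκ : 1 ≤ κ) (hα : 0 ≤ α) {y : ℝ} (hy : 0 ≤ y) :
    y ^ α * Real.exp (1 / 2 * y - y ^ κ) ≤
      Real.exp (1 / 2) * (2 * α / (Real.exp 1 * κ)) ^ (α / κ) := by
  have hA : 1 / 2 * y - 1 / 2 * y ^ κ ≤ 1 / 2 := by
    rcases le_total y 1 with h | h
    · have : (0:ℝ) ≤ y ^ κ := Real.rpow_nonneg hy κ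
      nlinarith
    · have : y ^ (1:ℝ) ≤ y ^ κ := Real.rpow_le_rpow_of_exponent_le h hκ
      rw [Real.rpow_one] at this
      linarith
  have hB := lemB hκ hα hy
  have : y ^ α * Real.exp (1 / 2 * y - y ^ κ) =
      (y ^ α * Real.exp (-(1 / 2 * y ^ κ))) * Real.exp (1 / 2 * y - 1 / 2 * y ^ κ) := by
    rw [mul_assoc, ← Real.exp_add]; ring_nf
  rw [this]
  have h1 : y ^ α * Real.exp (-(1 / 2 * y ^ κ)) ≤ (2 * α / (Real.exp 1 * κ)) ^ (α / κ) := by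
    have := mul_le_mul_of_nonneg_right hB (Real.exp_nonneg (-(1 / 2 * y ^ κ)))
    rwa [mul_assoc, ← Real.exp_add, add_neg_cancel, Real.exp_zero, mul_one] at this
  have h2 : Real.exp (1 / 2 * y - 1 / 2 * y ^ κ) ≤ Real.exp (1 / 2) := Real.exp_le_exp.mpr hA
  calc (y ^ α * Real.exp (-(1 / 2 * y ^ κ))) * Real.exp (1 / 2 * y - 1 / 2 * y ^ κ)
      ≤ (2 * α / (Real.exp 1 * κ)) ^ (α / κ) * Real.exp (1 / 2) := by
        apply mul_le_mul h1 h2 (Real.exp_nonneg _) (Real.rpow_nonneg (by positivity) _)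
    _ = Real.exp (1 / 2) * (2 * α / (Real.exp 1 * κ)) ^ (α / κ) := mul_comm _ _

lemma lemD {κ α : ℝ} (hκ : 1 ≤ κ) (hα : 0 ≤ α) {r τ : ℝ} (hr : 0 ≤ r) (hτ : 0 < τ) :
    r ^ α * Real.exp (1 / 2 * (τ ^ (1 / κ) * r) - τ * r ^ κ) ≤
      Real.exp (1 / 2) * (2 * α / (Real.exp 1 * κ)) ^ (α / κ) * τ ^ (-(α / κ)) := by
  have hκ0 : 0 < κ := lt_of_lt_of_le one_pos hκ
  set y : ℝ := τ ^ (1 / κ) * r with hydef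
  have hy : 0 ≤ y := mul_nonneg (Real.rpow_nonneg hτ.le _) hr
  have hyα : y ^ α = τ ^ (α / κ) * r ^ α := by
    rw [hydef, Real.mul_rpow (Real.rpow_nonneg hτ.le _) hr, ← Real.rpow_mul hτ.le]
    congr 2
    ring
  have hyκ : y ^ κ = τ * r ^ κ := by
    rw [hydef, Real.mul_rpow (Real.rpow_nonneg hτ.le _) hr, ← Real.rpow_mul hτ.le,
      one_div, inv_mul_cancel₀ hκ0.ne', Real.rpow_one]
  have h := lemC hκ hα hy
  rw [hyα, hyκ] at h
  have hτp : 0 < τ ^ (α / κ) := Real.rpow_pos_of_pos hτ _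
  have hneg : τ ^ (-(α / κ)) = (τ ^ (α / κ))⁻¹ := Real.rpow_neg hτ.le _
  calc r ^ α * Real.exp (1 / 2 * y - τ * r ^ κ)
      ≤ Real.exp (1 / 2) * (2 * α / (Real.exp 1 * κ)) ^ (α / κ) / τ ^ (α / κ) := by
        rw [le_div_iff₀ hτp]
        calc r ^ α * Real.exp (1 / 2 * y - τ * r ^ κ) * τ ^ (α / κ)
            = τ ^ (α / κ) * r ^ α * Real.exp (1 / 2 * y - τ * r ^ κ) := by ring
          _ ≤ _ := h
    _ = Real.exp (1 / 2) * (2 * α / (Real.exp 1 * κ)) ^ (α / κ) * τ ^ (-(α / κ)) := by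
        rw [hneg, div_eq_mul_inv]

lemma lemE {κ α : ℝ} (hκ : 1 ≤ κ) (hα : 0 ≤ α) {s t : ℝ} (hs : 0 ≤ s) (hst : s < t)
    {r : ℝ} (hr : 0 ≤ r) :
    r ^ α * Real.exp (1 / 2 * t ^ (1 / κ) * r) * Real.exp (-((t - s) * r ^ κ)) ≤
      (Real.exp (1 / 2) * (2 * α / (Real.exp 1 * κ)) ^ (α / κ) * (t - s) ^ (-(α / κ))) *
        Real.exp (1 / 2 * s ^ (1 / κ) * r) := by
  have hκ0 : 0 < κ := lt_of_lt_of_le one_pos hκ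
  have hτ : 0 < t - s := sub_pos.mpr hst
  have hsub : t ^ (1 / κ) ≤ s ^ (1 / κ) + (t - s) ^ (1 / κ) := by
    have h := subadd_rpow (p := 1 / κ) hs hτ.le (by positivity)
      ((div_le_one hκ0).mpr hκ)
    rwa [add_sub_cancel] at h
  have h1 : r ^ α * Real.exp (1 / 2 * t ^ (1 / κ) * r) * Real.exp (-((t - s) * r ^ κ))
      ≤ (r ^ α * Real.exp (1 / 2 * ((t - s) ^ (1 / κ) * r) - (t - s) * r ^ κ)) *
        Real.exp (1 / 2 * s ^ (1 / κ) * r) := by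
    have hXY : 1 / 2 * t ^ (1 / κ) * r + -((t - s) * r ^ κ) ≤
        (1 / 2 * ((t - s) ^ (1 / κ) * r) - (t - s) * r ^ κ) + 1 / 2 * s ^ (1 / κ) * r := by
      nlinarith [mul_le_mul_of_nonneg_right hsub hr]
    calc r ^ α * Real.exp (1 / 2 * t ^ (1 / κ) * r) * Real.exp (-((t - s) * r ^ κ))
        = r ^ α * Real.exp (1 / 2 * t ^ (1 / κ) * r + -((t - s) * r ^ κ)) := by
          rw [Real.exp_add]; ring
      _ ≤ r ^ α * Real.exp ((1 / 2 * ((t - s) ^ (1 / κ) * r) - (t - s) * r ^ κ)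
            + 1 / 2 * s ^ (1 / κ) * r) :=
          mul_le_mul_of_nonneg_left (Real.exp_le_exp.mpr hXY) (Real.rpow_nonneg hr _)
      _ = r ^ α * Real.exp (1 / 2 * ((t - s) ^ (1 / κ) * r) - (t - s) * r ^ κ) *
            Real.exp (1 / 2 * s ^ (1 / κ) * r) := by
          rw [Real.exp_add, mul_assoc]
          ring
  refine h1.trans ?_
  exact mul_le_mul_of_nonneg_right (lemD hκ hα hr hτ) (Real.exp_nonneg _)

/-- estimates (4.16)–(4.18). -/
theorem stmt3 (κ α : ℝ) (hκ : 1 ≤ κ) (hα : 0 ≤ α) :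
    ∃ C : ℝ, C = Real.exp (1 / 2) * (2 * α / (Real.exp 1 * κ)) ^ (α / κ) ∧
      ∀ d : ℕ, 1 ≤ d → ∀ s t : ℝ, 0 ≤ s → s < t →
        ∀ w : EuclideanSpace ℝ (Fin d) → ℂ, Measurable w →
          (∫⁻ ξ, ENNReal.ofReal (‖ξ‖ ^ α * Real.exp (1 / 2 * t ^ (1 / κ) * ‖ξ‖) *
              Real.exp (-((t - s) * ‖ξ‖ ^ κ))) * (‖w ξ‖₊ : ℝ≥0∞))
            ≤ ENNReal.ofReal (C * (t - s) ^ (-(α / κ))) *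
              ∫⁻ ξ, ENNReal.ofReal (Real.exp (1 / 2 * s ^ (1 / κ) * ‖ξ‖)) *
                (‖w ξ‖₊ : ℝ≥0∞) := by
  refine ⟨_, rfl, fun d hd s t hs hst w hw => ?_⟩
  set C : ℝ := Real.exp (1 / 2) * (2 * α / (Real.exp 1 * κ)) ^ (α / κ) with hC
  have hC0 : 0 ≤ C := by positivity
  have hτ : 0 < t - s := sub_pos.mpr hst
  have hCτ : 0 ≤ C * (t - s) ^ (-(α / κ)) := by positivity
  calc (∫⁻ ξ, ENNReal.ofReal (‖ξ‖ ^ α * Real.exp (1 / 2 * t ^ (1 / κ) * ‖ξ‖) *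
          Real.exp (-((t - s) * ‖ξ‖ ^ κ))) * (‖w ξ‖₊ : ℝ≥0∞))
      ≤ ∫⁻ ξ, ENNReal.ofReal (C * (t - s) ^ (-(α / κ))) *
          (ENNReal.ofReal (Real.exp (1 / 2 * s ^ (1 / κ) * ‖ξ‖)) * (‖w ξ‖₊ : ℝ≥0∞)) := by
        apply lintegral_mono
        intro ξ
        dsimp only
        rw [← mul_assoc, ← ENNReal.ofReal_mul hCτ]
        exact mul_le_mul_left
          (ENNReal.ofReal_le_ofReal (by
            have := lemE hκ hα hs hst (norm_nonneg ξ)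
            calc ‖ξ‖ ^ α * Real.exp (1 / 2 * t ^ (1 / κ) * ‖ξ‖) *
                Real.exp (-((t - s) * ‖ξ‖ ^ κ)) ≤ _ := this
              _ = C * (t - s) ^ (-(α / κ)) * Real.exp (1 / 2 * s ^ (1 / κ) * ‖ξ‖) := by
                  rw [hC])) _
    _ = ENNReal.ofReal (C * (t - s) ^ (-(α / κ))) *
          ∫⁻ ξ, ENNReal.ofReal (Real.exp (1 / 2 * s ^ (1 / κ) * ‖ξ‖)) * (‖w ξ‖₊ : ℝ≥0∞) :=
        lintegral_const_mul' _ _ ENNReal.ofReal_ne_top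
end

section
/- Let d ≥ 1, γ ≥ 0, n ≥ 1. Let a : ℕ^n → ℂ be coefficients with a(0) = 0, set F_M(r) = ∑_{k∈ℕ^n} |a_k| r^{|k|} where |k| = k₁ + ⋯ + k_n, and R_M = sup{r ≥ 0 : F_M(r) < ∞}. Let 0 ≤ R < R_M and let w₁, …, w_n : ℝ^d → ℂ be measurable with ‖w_i‖_γ ≤ R for each i. Then ∑_{k∈ℕ^n, k≠0} |a_k| · ‖w₁^{*k₁} * ⋯ * w_n^{*k_n}‖_γ ≤ F_M(R) < ∞, where w₁^{*k₁} * ⋯ * w_n^{*k_n} denotes the convolution of k₁ copies of w₁, k₂ copies of w₂, …, k_n copies of w_n. -/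
open MeasureTheory
open scoped ENNReal

/-- The exponentially weighted `L¹` (Gevrey) norm `‖w‖_γ = ∫ e^{γ‖ξ‖} |w(ξ)| dξ`. -/
noncomputable def gnorm (d : ℕ) (γ : ℝ) (w : EuclideanSpace ℝ (Fin d) → ℂ) : ℝ≥0∞ :=
  ∫⁻ ξ, ENNReal.ofReal (Real.exp (γ * ‖ξ‖)) * (‖w ξ‖₊ : ℝ≥0∞)

/-- Convolution on `ℝ^d`. -/
noncomputable def convE (d : ℕ) (u v : EuclideanSpace ℝ (Fin d) → ℂ) :
    EuclideanSpace ℝ (Fin d) → ℂ :=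
  fun ξ => ∫ η, u (ξ - η) * v η

/-- Convolution of a (nonempty) list of functions; the empty convolution is set to `0`. -/
noncomputable def convList (d : ℕ) :
    List (EuclideanSpace ℝ (Fin d) → ℂ) → EuclideanSpace ℝ (Fin d) → ℂ
  | [] => fun _ => 0
  | [f] => f
  | f :: g :: rest => convE d f (convList d (g :: rest))

/-- `multiConv d n w k` is the convolution `w₁^{*k₁} * ⋯ * w_n^{*k_n}` of `k₁` copies of
`w₁`, …, `k_n` copies of `w_n`. -/
noncomputable def multiConv (d n : ℕ) (w : Fin n → EuclideanSpace ℝ (Fin d) → ℂ)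
    (k : Fin n → ℕ) : EuclideanSpace ℝ (Fin d) → ℂ :=
  convList d ((List.ofFn fun i => List.replicate (k i) (w i)).flatten)

/-- The majorizing function `F_M(r) = ∑_k |a_k| r^{|k|}`, `|k| = k₁ + ⋯ + k_n`. -/
noncomputable def FM (n : ℕ) (a : (Fin n → ℕ) → ℂ) (r : ℝ) : ℝ≥0∞ :=
  ∑' k : Fin n → ℕ, ENNReal.ofReal ‖a k‖ * ENNReal.ofReal r ^ (∑ i, k i)

/-- The radius `R_M = sup {r ≥ 0 : F_M(r) < ∞}`. -/
noncomputable def RM (n : ℕ) (a : (Fin n → ℕ) → ℂ) : ℝ≥0∞ :=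
  ⨆ r : {r : ℝ // 0 ≤ r ∧ FM n a r < ⊤}, ENNReal.ofReal r.1

lemma measurable_convE {d : ℕ} {u v : EuclideanSpace ℝ (Fin d) → ℂ}
    (hu : Measurable u) (hv : Measurable v) : Measurable (convE d u v) := by
  have : Measurable fun p : EuclideanSpace ℝ (Fin d) × EuclideanSpace ℝ (Fin d) =>
      u (p.1 - p.2) * v p.2 :=
    (hu.comp (measurable_fst.sub measurable_snd)).mul (hv.comp measurable_snd)
  exact (this.stronglyMeasurable.integral_prod_right').measurable

lemma gnorm_convE_le {d : ℕ} {γ : ℝ} (hγ : 0 ≤ γ) {u v : EuclideanSpace ℝ (Fin d) → ℂ}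
    (hu : Measurable u) (hv : Measurable v) :
    gnorm d γ (convE d u v) ≤ gnorm d γ u * gnorm d γ v := by
  set e : EuclideanSpace ℝ (Fin d) → ℝ≥0∞ := fun x => ENNReal.ofReal (Real.exp (γ * ‖x‖)) with he_def
  have he : Measurable e := ((measurable_norm.const_mul γ).exp).ennreal_ofReal
  set g : EuclideanSpace ℝ (Fin d) → ℝ≥0∞ := fun x => e x * ‖u x‖₊ with hg_def
  set h : EuclideanSpace ℝ (Fin d) → ℝ≥0∞ := fun x => e x * ‖v x‖₊ with hh_def
  have hg : Measurable g := he.mul hu.nnnorm.coe_nnreal_ennreal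
  have hh : Measurable h := he.mul hv.nnnorm.coe_nnreal_ennreal
  have key : ∀ ξ η : EuclideanSpace ℝ (Fin d), e ξ ≤ e (ξ - η) * e η := by
    intro ξ η
    rw [he_def]
    simp only
    rw [← ENNReal.ofReal_mul (Real.exp_nonneg _), ← Real.exp_add]
    apply ENNReal.ofReal_le_ofReal
    apply Real.exp_le_exp.2
    rw [← mul_add]
    apply mul_le_mul_of_nonneg_left _ hγ
    calc ‖ξ‖ = ‖(ξ - η) + η‖ := by rw [sub_add_cancel]
    _ ≤ ‖ξ - η‖ + ‖η‖ := norm_add_le _ _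
  calc gnorm d γ (convE d u v)
      ≤ ∫⁻ ξ, e ξ * ∫⁻ η, (‖u (ξ - η)‖₊ : ℝ≥0∞) * ‖v η‖₊ := by
        apply lintegral_mono fun ξ => ?_
        refine mul_le_mul_right ?_ _
        calc (‖(convE d u v) ξ‖₊ : ℝ≥0∞) ≤ ∫⁻ η, ‖u (ξ - η) * v η‖₊ :=
          enorm_integral_le_lintegral_enorm _
        _ = ∫⁻ η, (‖u (ξ - η)‖₊ : ℝ≥0∞) * ‖v η‖₊ := by simp [nnnorm_mul, ENNReal.coe_mul]
    _ = ∫⁻ ξ, ∫⁻ η, e ξ * ((‖u (ξ - η)‖₊ : ℝ≥0∞) * ‖v η‖₊) := by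
        congr 1; funext ξ
        rw [lintegral_const_mul' _ _ ENNReal.ofReal_ne_top]
    _ ≤ ∫⁻ ξ, ∫⁻ η, g (ξ - η) * h η := by
        refine lintegral_mono fun ξ => lintegral_mono fun η => ?_
        calc e ξ * ((‖u (ξ - η)‖₊ : ℝ≥0∞) * ‖v η‖₊)
            ≤ (e (ξ - η) * e η) * ((‖u (ξ - η)‖₊ : ℝ≥0∞) * ‖v η‖₊) :=
              mul_le_mul_left (key ξ η) _
          _ = g (ξ - η) * h η := by ring
    _ = ∫⁻ η, ∫⁻ ξ, g (ξ - η) * h η := by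
        apply lintegral_lintegral_swap
        exact ((hg.comp (measurable_fst.sub measurable_snd)).mul
          (hh.comp measurable_snd)).aemeasurable
    _ = ∫⁻ η, (∫⁻ ξ, g (ξ - η)) * h η := by
        congr 1; funext η
        exact lintegral_mul_const _ (hg.comp (measurable_sub_const η))
    _ = ∫⁻ η, gnorm d γ u * h η := by
        congr 1; funext η
        rw [lintegral_sub_right_eq_self g η]; rfl
    _ = gnorm d γ u * gnorm d γ v := lintegral_const_mul _ hh

lemma convList_claim {d : ℕ} {γ : ℝ} (hγ : 0 ≤ γ) :
    ∀ l : List (EuclideanSpace ℝ (Fin d) → ℂ), l ≠ [] → (∀ f ∈ l, Measurable f) →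
      Measurable (convList d l) ∧ gnorm d γ (convList d l) ≤ (l.map (gnorm d γ)).prod := by
  intro l
  induction l with
  | nil => intro h; exact absurd rfl h
  | cons f l ih =>
    intro _ hm
    cases l with
    | nil =>
      refine ⟨hm f (by simp), ?_⟩
      simp [convList]
    | cons g rest =>
      have hm' : ∀ f' ∈ g :: rest, Measurable f' := fun f' hf' => hm f' (List.mem_cons_of_mem _ hf')
      obtain ⟨hmeas, hle⟩ := ih (by simp) hm'
      have hf : Measurable f := hm f (by simp)
      refine ⟨measurable_convE hf hmeas, ?_⟩
      calc gnorm d γ (convList d (f :: g :: rest))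
          ≤ gnorm d γ f * gnorm d γ (convList d (g :: rest)) := gnorm_convE_le hγ hf hmeas
        _ ≤ gnorm d γ f * ((g :: rest).map (gnorm d γ)).prod := mul_le_mul_right hle _
        _ = ((f :: g :: rest).map (gnorm d γ)).prod := by simp

/-- first part of Lemma 4.8: with `a(0) = 0`, `0 ≤ R < R_M` and
`‖w_i‖_γ ≤ R` for each `i`,
`∑_{k ≠ 0} |a_k| ‖w₁^{*k₁} * ⋯ * w_n^{*k_n}‖_γ ≤ F_M(R) < ∞`. -/
theorem stmt5 (d n : ℕ) (hd : 1 ≤ d) (hn : 1 ≤ n) (γ : ℝ) (hγ : 0 ≤ γ)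
    (a : (Fin n → ℕ) → ℂ) (ha0 : a 0 = 0)
    (R : ℝ) (hR : 0 ≤ R) (hRM : ENNReal.ofReal R < RM n a)
    (w : Fin n → EuclideanSpace ℝ (Fin d) → ℂ)
    (hw : ∀ i, Measurable (w i))
    (hwn : ∀ i, gnorm d γ (w i) ≤ ENNReal.ofReal R) :
    (∑' k : {k : Fin n → ℕ // k ≠ 0},
        ENNReal.ofReal ‖a k.1‖ * gnorm d γ (multiConv d n w k.1))
      ≤ FM n a R ∧ FM n a R < ⊤ := by
  have hfin : FM n a R < ⊤ := by
    rw [RM, lt_iSup_iff] at hRM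
    obtain ⟨⟨r, hr0, hrfin⟩, hlt⟩ := hRM
    have hRr : R ≤ r := le_of_lt ((ENNReal.ofReal_lt_ofReal_iff_of_nonneg hR).mp hlt)
    refine lt_of_le_of_lt (ENNReal.tsum_le_tsum fun k => ?_) hrfin
    exact mul_le_mul_right
      (pow_le_pow_left₀ zero_le (ENNReal.ofReal_le_ofReal hRr) _) _
  have hconv : ∀ k : Fin n → ℕ, k ≠ 0 →
      gnorm d γ (multiConv d n w k) ≤ ENNReal.ofReal R ^ (∑ i, k i) := by
    intro k hk
    set L := (List.ofFn fun i => List.replicate (k i) (w i)).flatten with hL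
    have hlen : L.length = ∑ i, k i := by
      simp [hL, List.length_flatten, List.map_ofFn, Function.comp, List.sum_ofFn]
    have hLne : L ≠ [] := by
      intro h
      apply hk
      have hsum : (∑ i, k i) = 0 := by rw [← hlen, h, List.length_nil]
      funext i
      exact Finset.sum_eq_zero_iff.mp hsum i (Finset.mem_univ i)
    have hmem : ∀ f ∈ L, Measurable f := by
      intro f hf
      rw [hL, List.mem_flatten] at hf
      obtain ⟨l, hl, hfl⟩ := hf
      rw [List.mem_ofFn] at hl
      obtain ⟨i, rfl⟩ := hl
      rw [List.eq_of_mem_replicate hfl]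
      exact hw i
    calc gnorm d γ (multiConv d n w k) ≤ (L.map (gnorm d γ)).prod :=
        (convList_claim hγ L hLne hmem).2
      _ = ∏ i, gnorm d γ (w i) ^ k i := by
          simp [hL, List.map_flatten, List.map_ofFn, Function.comp, List.prod_flatten,
            List.prod_ofFn, List.map_replicate, List.prod_replicate]
      _ ≤ ∏ i, ENNReal.ofReal R ^ k i :=
          Finset.prod_le_prod' fun i _ => pow_le_pow_left₀ zero_le (hwn i) _
      _ = ENNReal.ofReal R ^ (∑ i, k i) := Finset.prod_pow_eq_pow_sum _ _ _
  refine ⟨?_, hfin⟩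
  calc (∑' k : {k : Fin n → ℕ // k ≠ 0},
        ENNReal.ofReal ‖a k.1‖ * gnorm d γ (multiConv d n w k.1))
      ≤ ∑' k : {k : Fin n → ℕ // k ≠ 0},
        ENNReal.ofReal ‖a k.1‖ * ENNReal.ofReal R ^ (∑ i, k.1 i) :=
        ENNReal.tsum_le_tsum fun k => mul_le_mul_right (hconv k.1 k.2) _
    _ ≤ FM n a R :=
        ENNReal.tsum_comp_le_tsum_of_injective Subtype.val_injective
          (fun k => ENNReal.ofReal ‖a k‖ * ENNReal.ofReal R ^ (∑ i, k i))
end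

section
/- For every κ > 0 there exists a constant C ≥ 1, depending only on κ, such that for every real β ≥ 1 the series ∑_{j∈ℤ} 2^{jβ} exp(−2^{jκ}) converges and ∑_{j∈ℤ} 2^{jβ} exp(−2^{jκ}) ≤ 2 C^{β/κ} β^{β/κ}. -/
private lemma key_rpow_exp (p : ℝ) (hp : 0 < p) (x : ℝ) (hx : 0 < x) :
    x ^ p * Real.exp (-x / 2) ≤ (2 * p) ^ p := by
  have h2p : 0 < 2 * p := by linarith
  have h1 : x ≤ 2 * p * Real.exp (x / (2 * p)) := by
    have h := Real.add_one_le_exp (x / (2 * p))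
    have hxle : x / (2 * p) ≤ Real.exp (x / (2 * p)) := by
      nlinarith [div_nonneg hx.le h2p.le]
    calc x = 2 * p * (x / (2 * p)) := by field_simp
      _ ≤ 2 * p * Real.exp (x / (2 * p)) := by nlinarith
  have h2 : x ^ p ≤ (2 * p * Real.exp (x / (2 * p))) ^ p :=
    Real.rpow_le_rpow hx.le h1 hp.le
  have h3 : (2 * p * Real.exp (x / (2 * p))) ^ p
      = (2 * p) ^ p * Real.exp (x / 2) := by
    rw [Real.mul_rpow h2p.le (Real.exp_pos _).le, ← Real.exp_mul]
    congr 2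
    field_simp
  have h4 : x ^ p * Real.exp (-x / 2) ≤ (2 * p) ^ p * Real.exp (x / 2) * Real.exp (-x / 2) :=
    mul_le_mul_of_nonneg_right (h2.trans_eq h3) (Real.exp_pos _).le
  calc x ^ p * Real.exp (-x / 2) ≤ (2 * p) ^ p * Real.exp (x / 2) * Real.exp (-x / 2) := h4
    _ = (2 * p) ^ p * Real.exp (x / 2 + -x / 2) := by rw [Real.exp_add]; ring
    _ = (2 * p) ^ p := by rw [show x / 2 + -x / 2 = 0 by ring, Real.exp_zero, mul_one]

/-- For every `κ > 0` there exists `C ≥ 1`, depending only on `κ`,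
such that for every real `β ≥ 1` the series `∑_{j∈ℤ} 2^{jβ} exp(−2^{jκ})` converges and
is bounded by `2 C^{β/κ} β^{β/κ}`. -/
theorem stmt14 (κ : ℝ) (hκ : 0 < κ) :
    ∃ C : ℝ, 1 ≤ C ∧ ∀ β : ℝ, 1 ≤ β →
      Summable (fun j : ℤ => (2 : ℝ) ^ ((j : ℝ) * β) * Real.exp (-(2 : ℝ) ^ ((j : ℝ) * κ))) ∧
      (∑' j : ℤ, (2 : ℝ) ^ ((j : ℝ) * β) * Real.exp (-(2 : ℝ) ^ ((j : ℝ) * κ)))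
        ≤ 2 * C ^ (β / κ) * β ^ (β / κ) := by
  set t : ℝ := (2 : ℝ) ^ κ with ht_def
  have ht1 : 1 < t := Real.one_lt_rpow_iff_of_pos (by norm_num) |>.2 (Or.inl ⟨by norm_num, hκ⟩)
  set r : ℝ := Real.exp (-((t - 1) / 2)) with hr_def
  have hr0 : 0 < r := Real.exp_pos _
  have hr1 : r < 1 := by
    rw [hr_def, Real.exp_lt_one_iff]; linarith
  set D : ℝ := (1 - r)⁻¹ with hD_def
  have h1r0 : 0 < 1 - r := by linarith
  have hD0 : 0 < D := inv_pos.2 h1r0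
  have hD1 : 1 ≤ D := by
    rw [hD_def, le_inv_comm₀ one_pos h1r0]; linarith
  set E : ℝ := max 1 (2 / κ) with hE_def
  have hE1 : 1 ≤ E := le_max_left _ _
  have hCp1 : (1 : ℝ) ≤ (1 + D) ^ κ := by
    calc (1:ℝ) = 1 ^ κ := (Real.one_rpow κ).symm
      _ ≤ (1 + D) ^ κ := Real.rpow_le_rpow zero_le_one (by linarith) hκ.le
  refine ⟨(1 + D) ^ κ * E, by nlinarith, ?_⟩
  intro β hβ
  set p : ℝ := β / κ with hp_def
  have hp0 : 0 < p := div_pos (by linarith) hκ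
  set f : ℤ → ℝ := fun j => (2 : ℝ) ^ ((j : ℝ) * β) * Real.exp (-(2 : ℝ) ^ ((j : ℝ) * κ)) with hf_def
  have hf_nonneg : ∀ j, 0 ≤ f j := fun j =>
    mul_nonneg (Real.rpow_nonneg (by norm_num) _) (Real.exp_pos _).le
  have hEβ1 : 1 ≤ E * β := one_le_mul_of_one_le_of_one_le hE1 hβ
  have hEβp1 : 1 ≤ (E * β) ^ p := by
    calc (1:ℝ) = 1 ^ p := (Real.one_rpow p).symm
      _ ≤ (E * β) ^ p := Real.rpow_le_rpow zero_le_one hEβ1 hp0.le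
  -- bound for the nonnegative part
  have hpos_bound : ∀ n : ℕ, f (n : ℤ) ≤ (E * β) ^ p * r ^ n := by
    intro n
    rcases Nat.eq_zero_or_pos n with hn | hn
    · subst hn
      have h0 : f ((0:ℕ) : ℤ) = Real.exp (-1) := by
        simp [hf_def]
      rw [h0]
      calc Real.exp (-1) ≤ 1 := by
            rw [Real.exp_le_one_iff]; norm_num
        _ ≤ (E * β) ^ p := hEβp1
        _ = (E * β) ^ p * r ^ 0 := by rw [pow_zero, mul_one]
    · have hcast : ((n : ℤ) : ℝ) = (n : ℝ) := by push_cast; ring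
      set x : ℝ := (2 : ℝ) ^ ((n : ℝ) * κ) with hx_def
      have hx0 : 0 < x := Real.rpow_pos_of_pos (by norm_num) _
      have hxp : x ^ p = (2 : ℝ) ^ ((n : ℝ) * β) := by
        rw [hx_def, ← Real.rpow_mul (by norm_num : (0:ℝ) ≤ 2)]
        congr 1
        rw [hp_def]
        field_simp
      have hxt : x = t ^ n := by
        rw [hx_def, ht_def, ← Real.rpow_natCast ((2:ℝ) ^ κ) n,
          ← Real.rpow_mul (by norm_num : (0:ℝ) ≤ 2), mul_comm]
      have hfn : f (n : ℤ) = x ^ p * (Real.exp (-x / 2) * Real.exp (-x / 2)) := by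
        rw [← Real.exp_add, show -x / 2 + -x / 2 = -x by ring, hf_def]
        simp only [hcast, hxp, hx_def]
        rw [← hx_def, hxp]
      -- first factor bound
      have hb1 : x ^ p * Real.exp (-x / 2) ≤ (E * β) ^ p := by
        refine (key_rpow_exp p hp0 x hx0).trans ?_
        apply Real.rpow_le_rpow (by linarith) ?_ hp0.le
        have h2κ : 2 / κ ≤ E := le_max_right _ _
        have : 2 * p = (2 / κ) * β := by rw [hp_def]; field_simp
        rw [this]
        exact mul_le_mul_of_nonneg_right h2κ (by linarith)
      -- second factor bound
      have hb2 : Real.exp (-x / 2) ≤ r ^ n := by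
        rw [hr_def, ← Real.exp_nat_mul, Real.exp_le_exp]
        have hbern : 1 + (n : ℝ) * (t - 1) ≤ t ^ n := by
          have h := one_add_mul_le_pow (a := t - 1) (by linarith : (-2:ℝ) ≤ t - 1) n
          rw [show 1 + (t - 1) = t by ring] at h
          exact h
        rw [hxt]
        have hn1 : (1 : ℝ) ≤ (n : ℝ) := by exact_mod_cast hn
        nlinarith
      calc f (n : ℤ) = x ^ p * Real.exp (-x / 2) * Real.exp (-x / 2) := by rw [hfn]; ring
        _ ≤ (E * β) ^ p * r ^ n := by
            apply mul_le_mul hb1 hb2 (Real.exp_pos _).le (by positivity)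
  -- bound for the negative part
  have hneg_bound : ∀ n : ℕ, f (-((n : ℤ) + 1)) ≤ (1 / 2 : ℝ) ^ n := by
    intro n
    have hc : ((-((n : ℤ) + 1) : ℤ) : ℝ) = -((n : ℝ) + 1) := by push_cast; ring
    have h1 : f (-((n : ℤ) + 1)) ≤ (2 : ℝ) ^ (-((n : ℝ) + 1) * β) := by
      simp only [hf_def, hc]
      calc (2:ℝ) ^ (-((n : ℝ) + 1) * β) * Real.exp (-(2 : ℝ) ^ (-((n : ℝ) + 1) * κ))
          ≤ (2:ℝ) ^ (-((n : ℝ) + 1) * β) * 1 := by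
            apply mul_le_mul_of_nonneg_left ?_ (Real.rpow_nonneg (by norm_num) _)
            rw [Real.exp_le_one_iff]
            have : (0:ℝ) < (2 : ℝ) ^ (-((n : ℝ) + 1) * κ) := Real.rpow_pos_of_pos (by norm_num) _
            linarith
        _ = (2:ℝ) ^ (-((n : ℝ) + 1) * β) := mul_one _
    have h2 : (2 : ℝ) ^ (-((n : ℝ) + 1) * β) ≤ (2 : ℝ) ^ (-(n : ℝ)) := by
      apply Real.rpow_le_rpow_of_exponent_le (by norm_num)
      nlinarith [Nat.cast_nonneg (α := ℝ) n]
    have h3 : (2 : ℝ) ^ (-(n : ℝ)) = (1 / 2 : ℝ) ^ n := by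
      rw [Real.rpow_neg (by norm_num), Real.rpow_natCast, one_div, inv_pow]
    linarith
  have hgeo_r : Summable (fun n : ℕ => (E * β) ^ p * r ^ n) :=
    (summable_geometric_of_lt_one hr0.le hr1).mul_left _
  have hgeo_half : Summable (fun n : ℕ => (1 / 2 : ℝ) ^ n) :=
    summable_geometric_of_lt_one (by norm_num) (by norm_num)
  have hs_pos : Summable (fun n : ℕ => f (n : ℤ)) :=
    Summable.of_nonneg_of_le (fun n => hf_nonneg _) hpos_bound hgeo_r
  have hs_neg : Summable (fun n : ℕ => f (-((n : ℤ) + 1))) :=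
    Summable.of_nonneg_of_le (fun n => hf_nonneg _) hneg_bound hgeo_half
  have hhs : HasSum f ((∑' n : ℕ, f (n : ℤ)) + ∑' n : ℕ, f (-((n : ℤ) + 1))) :=
    HasSum.of_nat_of_neg_add_one hs_pos.hasSum hs_neg.hasSum
  refine ⟨hhs.summable, ?_⟩
  have htsum : (∑' j : ℤ, f j) = (∑' n : ℕ, f (n : ℤ)) + ∑' n : ℕ, f (-((n : ℤ) + 1)) :=
    hhs.tsum_eq
  have hsum_pos : (∑' n : ℕ, f (n : ℤ)) ≤ (E * β) ^ p * D := by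
    calc (∑' n : ℕ, f (n : ℤ)) ≤ ∑' n : ℕ, (E * β) ^ p * r ^ n :=
          Summable.tsum_le_tsum hpos_bound hs_pos hgeo_r
      _ = (E * β) ^ p * ∑' n : ℕ, r ^ n := tsum_mul_left
      _ = (E * β) ^ p * D := by rw [tsum_geometric_of_lt_one hr0.le hr1, hD_def]
  have hsum_neg : (∑' n : ℕ, f (-((n : ℤ) + 1))) ≤ 2 := by
    calc (∑' n : ℕ, f (-((n : ℤ) + 1))) ≤ ∑' n : ℕ, (1 / 2 : ℝ) ^ n :=
          Summable.tsum_le_tsum hneg_bound hs_neg hgeo_half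
      _ = 2 := by rw [tsum_geometric_of_lt_one (by norm_num) (by norm_num)]; norm_num
  -- final algebraic estimate
  have hCexp : ((1 + D) ^ κ * E) ^ p = (1 + D) ^ β * E ^ p := by
    rw [Real.mul_rpow (by positivity) (by linarith), ← Real.rpow_mul (by linarith)]
    congr 2
    rw [hp_def]; field_simp
  have hDβ : 1 + D ≤ (1 + D) ^ β := by
    calc 1 + D = (1 + D) ^ (1 : ℝ) := (Real.rpow_one _).symm
      _ ≤ (1 + D) ^ β := Real.rpow_le_rpow_of_exponent_le (by linarith) hβ
  have hEβp : E ^ p * β ^ p = (E * β) ^ p := (Real.mul_rpow (by linarith) (by linarith)).symm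
  have hfinal : (E * β) ^ p * D + 2 ≤ 2 * ((1 + D) ^ κ * E) ^ p * β ^ p := by
    have h1 : 2 * ((1 + D) ^ κ * E) ^ p * β ^ p = 2 * (1 + D) ^ β * (E * β) ^ p := by
      rw [hCexp, ← hEβp]; ring
    rw [h1]
    nlinarith [hEβp1, hDβ, hD1]
  calc (∑' j : ℤ, f j) = (∑' n : ℕ, f (n : ℤ)) + ∑' n : ℕ, f (-((n : ℤ) + 1)) := htsum
    _ ≤ (E * β) ^ p * D + 2 := add_le_add hsum_pos hsum_neg
    _ ≤ 2 * ((1 + D) ^ κ * E) ^ p * β ^ p := hfinal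
end
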